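/- Every principal sub-tensor of a strong P tensor is a strong P tensor: if A ∈ T_{m,n} is a strong P tensor and J ⊆ [n] with |J| = r, then the principal sub-tensor A_r^J (entries a_{i_1⋯i_m} with all indices in J) is a strong P tensor in T_{m,r}. -/
import Mathlib


/-- `(A x^{m-1})_i = ∑_{i_2,…,i_m} a_{i i_2 ⋯ i_m} x_{i_2} ⋯ x_{i_m}`,
for a real tensor of order `k+1` and dimension `n`, encoded as
`A : Fin n → (Fin k → Fin n) → ℝ`. -/
noncomputable def tApply {n k : ℕ} (A : Fin n → (Fin k → Fin n) → ℝ)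
    (x : Fin n → ℝ) (i : Fin n) : ℝ :=
  ∑ f : Fin k → Fin n, A i f * ∏ j, x (f j)

lemma tApply_extend {n r k : ℕ} (A : Fin n → (Fin k → Fin n) → ℝ)
    (ι : Fin r → Fin n) (hι : Function.Injective ι) (x : Fin r → ℝ) (i : Fin r) :
    tApply A (Function.extend ι x 0) (ι i)
      = tApply (fun k f => A (ι k) (ι ∘ f)) x i := by
  unfold tApply
  have hinj : Function.Injective (fun g : Fin k → Fin r => ι ∘ g) := by
    intro a b hab; funext j; exact hι (congrFun hab j)
  calc ∑ f : Fin k → Fin n, A (ι i) f * ∏ j, Function.extend ι x 0 (f j)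
      = ∑ f ∈ (Finset.univ : Finset (Fin k → Fin r)).image (fun g => ι ∘ g),
          A (ι i) f * ∏ j, Function.extend ι x 0 (f j) := by
        rw [eq_comm]
        apply Finset.sum_subset (Finset.subset_univ _)
        intro f _ hf
        have : ∃ j, f j ∉ Set.range ι := by
          by_contra h
          push_neg at h
          apply hf
          choose g hg using h
          exact Finset.mem_image.2 ⟨g, Finset.mem_univ _, funext hg⟩
        obtain ⟨j, hj⟩ := this
        have : Function.extend ι x 0 (f j) = 0 := by
          rw [Function.extend_apply' _ _ _ (by simpa [Set.range] using hj)]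
          rfl
        rw [Finset.prod_eq_zero (Finset.mem_univ j) this, mul_zero]
    _ = ∑ g : Fin k → Fin r, A (ι i) (ι ∘ g) *
          ∏ j, Function.extend ι x 0 (ι (g j)) := by
        rw [Finset.sum_image (fun a _ b _ h => hinj h)]
        rfl
    _ = ∑ g : Fin k → Fin r, A (ι i) (ι ∘ g) * ∏ j, x (g j) := by
        apply Finset.sum_congr rfl
        intro g _
        congr 1
        exact Finset.prod_congr rfl fun j _ => hι.extend_apply x 0 (g j)

/-- Every principal sub-tensor of a strong P tensor is a
strong P tensor. The index set J ⊆ [n] with |J| = r is encoded as an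
injection ι : Fin r → Fin n; the principal sub-tensor has entries
(fun k f => A (ι k) (ι ∘ f)). -/
theorem stmt_19 {m n r : ℕ} (A : Fin n → (Fin (m - 1) → Fin n) → ℝ)
    (ι : Fin r → Fin n) (hι : Function.Injective ι)
    (hsP : ∀ x y : Fin n → ℝ, x ≠ y →
      ∃ i, (x i - y i) * (tApply A x i - tApply A y i) > 0) :
    ∀ x y : Fin r → ℝ, x ≠ y →
      ∃ k, (x k - y k) *
        (tApply (fun k f => A (ι k) (ι ∘ f)) x k -
         tApply (fun k f => A (ι k) (ι ∘ f)) y k) > 0 := by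
  intro x y hxy
  have hne : Function.extend ι x 0 ≠ Function.extend ι y 0 := by
    intro h
    apply hxy
    funext k
    have := congrFun h (ι k)
    rwa [hι.extend_apply, hι.extend_apply] at this
  obtain ⟨i, hi⟩ := hsP _ _ hne
  have hirange : ∃ k, ι k = i := by
    by_contra h
    push_neg at h
    rw [Function.extend_apply' _ _ _ (by simpa using h),
        Function.extend_apply' _ _ _ (by simpa using h)] at hi
    simp at hi
  obtain ⟨k, rfl⟩ := hirange
  refine ⟨k, ?_⟩
  rwa [hι.extend_apply, hι.extend_apply, tApply_extend A ι hι,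
    tApply_extend A ι hι] at hi
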